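/- Expansion identity: for symmetric weights β_{ij} on a finite vertex set, exp(½(u,Δ_β u)) = Σ_{F forest} ∏_{ij∈F} β_{ij}(u_i·u_j + 1) in the Grassmann algebra, where the sum over all edge subsets reduces to forests because products over sets containing cycles vanish. -/

import Mathlib

open ExteriorAlgebra

noncomputable section

/-- Coordinate module carrying the `2n` Grassmann generators. -/
abbrev GrM (n : ℕ) : Type := (Fin n × Bool) → ℝ

/-- The real Grassmann algebra with generators `(ξ i, η i)`. -/
abbrev Gr (n : ℕ) : Type := ExteriorAlgebra ℝ (GrM n)

/-- Generator `ξ i`. -/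
def gξ {n : ℕ} (i : Fin n) : Gr n := ι ℝ (Pi.single (i, false) (1 : ℝ))

/-- Generator `η i`. -/
def gη {n : ℕ} (i : Fin n) : Gr n := ι ℝ (Pi.single (i, true) (1 : ℝ))

/-- `z i = 1 - ξ i * η i`. -/
def gz {n : ℕ} (i : Fin n) : Gr n := 1 - gξ i * gη i

/-- `u i · u j = -ξ i η j - ξ j η i - z i z j`. -/
def udot {n : ℕ} (i j : Fin n) : Gr n := -(gξ i * gη j) - gξ j * gη i - gz i * gz j

/-- Grassmann (left) derivative `∂_{ξ i}`, i.e. left contraction. -/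
def dξ {n : ℕ} (i : Fin n) : Module.End ℝ (Gr n) :=
  CliffordAlgebra.contractLeft (Q := (0 : QuadraticForm ℝ (GrM n))) (LinearMap.proj (i, false))

/-- Grassmann (left) derivative `∂_{η i}`. -/
def dη {n : ℕ} (i : Fin n) : Module.End ℝ (Gr n) :=
  CliffordAlgebra.contractLeft (Q := (0 : QuadraticForm ℝ (GrM n))) (LinearMap.proj (i, true))

/-- The pair `∂_{η i} ∂_{ξ i}`. -/
def pairD {n : ℕ} (i : Fin n) : Module.End ℝ (Gr n) := dη i * dξ i

/-- `∏ i, ∂_{η i} ∂_{ξ i}`. -/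
def fullD {n : ℕ} : Module.End ℝ (Gr n) := (List.ofFn (fun i : Fin n => pairD i)).prod

/-- Plain Berezin integral: apply all derivatives, take the scalar (degree-0) part. -/
def bint {n : ℕ} (G : Gr n) : ℝ := algebraMapInv (fullD G)

/-- Hyperbolic fermionic integral `[G]_0 = ∏ᵢ ∂_{ηᵢ}∂_{ξᵢ} ((∏ᵢ (1+ξᵢηᵢ)) G)`,
using `1/zᵢ = 1 + ξᵢηᵢ`. -/
def sint {n : ℕ} (G : Gr n) : ℝ :=
  bint ((List.ofFn (fun i : Fin n => (1 : Gr n) + gξ i * gη i)).prod * G)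

/-- Exponential of a Grassmann element by its terminating power series:
for elements with vanishing degree-0 part, `x ^ (2n+1) = 0`, so the series below is exact. -/
def expG {n : ℕ} (x : Gr n) : Gr n :=
  ∑ k ∈ Finset.range (2 * n + 1), (k.factorial : ℝ)⁻¹ • x ^ k

open scoped Classical

/-- `F` is a forest: edges are recorded as ordered pairs with `p.1 < p.2` and the
induced simple graph is acyclic. -/
def ForestRep {n : ℕ} (F : Finset (Fin n × Fin n)) : Prop :=
  (∀ p ∈ F, p.1 < p.2) ∧ (SimpleGraph.fromRel (fun i j => (i, j) ∈ F)).IsAcyclic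

/-- Weight `∏_{ij ∈ F} β i j` of a forest. -/
def fwt {n : ℕ} (β : Fin n → Fin n → ℝ) (F : Finset (Fin n × Fin n)) : ℝ :=
  ∏ p ∈ F, β p.1 p.2

/-- `∏_{T tree of F} (1 + ∑_{i ∈ T} g i)`, product over connected components. -/
noncomputable def treeFactor {n : ℕ} (F : Finset (Fin n × Fin n)) (g : Fin n → ℝ) : ℝ :=
  ∏ c ∈ Finset.univ.image (SimpleGraph.fromRel (fun i j => (i, j) ∈ F)).connectedComponentMk,
    (1 + ∑ i ∈ Finset.univ.filter
        (fun i => (SimpleGraph.fromRel (fun i j => (i, j) ∈ F)).connectedComponentMk i = c), g i)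

/-! ### Auxiliary material for the forest expansion -/

namespace ForestExpAux

variable {n : ℕ}

lemma iswap (a b : GrM n) : ι ℝ a * ι ℝ b = -(ι ℝ b * ι ℝ a) :=
  eq_neg_of_add_eq_zero_left (ι_add_mul_swap a b)

lemma ι_mul_eq_involute_mul (v : GrM n) (x : Gr n) :
    ι ℝ v * x = CliffordAlgebra.involute x * ι ℝ v := by
  induction x using ExteriorAlgebra.induction with
  | algebraMap r =>
      rw [AlgHom.commutes]
      exact (Algebra.commutes r (ι ℝ v)).symm
  | ι m => rw [CliffordAlgebra.involute_ι, iswap, neg_mul]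
  | mul a b ha hb => rw [← mul_assoc, ha, mul_assoc, hb, ← mul_assoc, ← map_mul]
  | add a b ha hb => rw [mul_add, ha, hb, map_add, add_mul]

/-- Key nilpotency: `ι v * x * ι v = 0` for any `x`. -/
lemma ι_mul_mul_ι (v : GrM n) (x : Gr n) : ι ℝ v * x * ι ℝ v = 0 := by
  rw [ι_mul_eq_involute_mul, mul_assoc, ι_sq_zero, mul_zero]

/-- Products of two generators are central. -/
lemma central_ιι (a b : GrM n) (y : Gr n) : Commute (ι ℝ a * ι ℝ b) y := by
  induction y using ExteriorAlgebra.induction with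
  | algebraMap r => exact (Algebra.commutes r _).symm
  | ι m =>
      show ι ℝ a * ι ℝ b * ι ℝ m = ι ℝ m * (ι ℝ a * ι ℝ b)
      calc ι ℝ a * ι ℝ b * ι ℝ m = ι ℝ a * (ι ℝ b * ι ℝ m) := by rw [mul_assoc]
        _ = -(ι ℝ a * (ι ℝ m * ι ℝ b)) := by rw [iswap b m, mul_neg]
        _ = -(ι ℝ a * ι ℝ m) * ι ℝ b := by rw [← mul_assoc, neg_mul]
        _ = ι ℝ m * ι ℝ a * ι ℝ b := by rw [iswap a m, neg_neg]
        _ = ι ℝ m * (ι ℝ a * ι ℝ b) := by rw [mul_assoc]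
  | mul c d hc hd => exact hc.mul_right hd
  | add c d hc hd => exact hc.add_right hd

lemma ι_mem_mul_prod_zero :
    ∀ (l : List (GrM n)) (v : GrM n), v ∈ l → ∀ x : Gr n,
      ι ℝ v * (x * (l.map (ι ℝ)).prod) = 0 := by
  intro l
  induction l with
  | nil => intro v hv; cases hv
  | cons w t ih =>
      intro v hv x
      rw [List.map_cons, List.prod_cons]
      rcases List.mem_cons.mp hv with rfl | h
      · have e : ι ℝ v * (x * (ι ℝ v * (t.map (ι ℝ)).prod))
            = (ι ℝ v * x * ι ℝ v) * (t.map (ι ℝ)).prod := by noncomm_ring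
        rw [e, ι_mul_mul_ι, zero_mul]
      · have e : ι ℝ v * (x * (ι ℝ w * (t.map (ι ℝ)).prod))
            = ι ℝ v * ((x * ι ℝ w) * (t.map (ι ℝ)).prod) := by noncomm_ring
        rw [e, ih v h (x * ι ℝ w)]

lemma prod_mul_mul_ι_zero :
    ∀ (l : List (GrM n)) (v : GrM n), v ∈ l → ∀ x : Gr n,
      ((l.map (ι ℝ)).prod * x) * ι ℝ v = 0 := by
  intro l
  induction l with
  | nil => intro v hv; cases hv
  | cons w t ih =>
      intro v hv x
      rw [List.map_cons, List.prod_cons]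
      rcases List.mem_cons.mp hv with rfl | h
      · have e : ((ι ℝ v * (t.map (ι ℝ)).prod) * x) * ι ℝ v
            = ι ℝ v * ((t.map (ι ℝ)).prod * x) * ι ℝ v := by noncomm_ring
        rw [e, ι_mul_mul_ι]
      · have e : ((ι ℝ w * (t.map (ι ℝ)).prod) * x) * ι ℝ v
            = ι ℝ w * (((t.map (ι ℝ)).prod * x) * ι ℝ v) := by noncomm_ring
        rw [e, ih v h x, mul_zero]

lemma dup_zero (l : List (GrM n)) (h : ¬ l.Nodup) : (l.map (ι ℝ)).prod = 0 := by
  induction l with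
  | nil => exact absurd List.nodup_nil h
  | cons a t ih =>
      rw [List.map_cons, List.prod_cons]
      by_cases ha : a ∈ t
      · have := ι_mem_mul_prod_zero t a ha 1
        rw [one_mul] at this
        rw [this]
      · have ht : ¬ t.Nodup := by
          intro hnd; exact h (List.nodup_cons.mpr ⟨ha, hnd⟩)
        rw [ih ht, mul_zero]

/-- If a nontrivial linear combination of (signed) members of `l` vanishes, then the
product of the `ι`'s of `l` vanishes. -/
lemma dep_zero (l : List (GrM n)) (s : Finset (GrM n)) (c : GrM n → ℝ)
    (hmem : ∀ v ∈ s, v ∈ l ∨ -v ∈ l)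
    (hng : ∀ v ∈ s, ∀ w ∈ s, v + w ≠ 0)
    (hsum : ∑ v ∈ s, c v • v = 0)
    (v0 : GrM n) (hv0 : v0 ∈ s) (hc0 : c v0 ≠ 0) :
    (l.map (ι ℝ)).prod = 0 := by
  obtain ⟨w0, hw0l, hw0⟩ : ∃ w0, w0 ∈ l ∧ (w0 = v0 ∨ w0 = -v0) := by
    rcases hmem v0 hv0 with h | h
    exacts [⟨v0, h, Or.inl rfl⟩, ⟨-v0, h, Or.inr rfl⟩]
  obtain ⟨l1, l2, rfl⟩ := List.append_of_mem hw0l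
  rw [List.map_append, List.prod_append, List.map_cons, List.prod_cons]
  have key : ∀ v ∈ s.erase v0,
      (l1.map (ι ℝ)).prod * (ι ℝ v * (l2.map (ι ℝ)).prod) = 0 := by
    intro v hv
    have hvs := Finset.mem_of_mem_erase hv
    have hvne : v ≠ v0 := Finset.ne_of_mem_erase hv
    have hvne2 : v ≠ -v0 := by
      intro h
      exact hng v hvs v0 hv0 (by rw [h, neg_add_cancel])
    have hvne3 : -v ≠ v0 := by
      intro h; exact hvne2 (by rw [← h, neg_neg])
    have hvne4 : -v ≠ -v0 := fun h => hvne (neg_injective h)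
    have hl2 : ∀ u : GrM n, (u = v ∨ u = -v) → u ∈ l2 →
        ι ℝ v * (l2.map (ι ℝ)).prod = 0 := by
      intro u hu hul2
      rcases hu with rfl | rfl
      · have := ι_mem_mul_prod_zero l2 u hul2 1
        rwa [one_mul] at this
      · have h0 := ι_mem_mul_prod_zero l2 (-v) hul2 1
        rw [one_mul] at h0
        have hv' : ι ℝ v = -(ι ℝ (-v)) := by rw [map_neg, neg_neg]
        rw [hv', neg_mul, h0, neg_zero]
    have hl1 : ∀ u : GrM n, (u = v ∨ u = -v) → u ∈ l1 →
        (l1.map (ι ℝ)).prod * ι ℝ v = 0 := by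
      intro u hu hul1
      rcases hu with rfl | rfl
      · have := prod_mul_mul_ι_zero l1 u hul1 1
        rwa [mul_one] at this
      · have h0 := prod_mul_mul_ι_zero l1 (-v) hul1 1
        rw [mul_one] at h0
        have hv' : ι ℝ v = -(ι ℝ (-v)) := by rw [map_neg, neg_neg]
        rw [hv', mul_neg, h0, neg_zero]
    have hcases : (∃ u : GrM n, (u = v ∨ u = -v) ∧ u ∈ l1) ∨
        (∃ u : GrM n, (u = v ∨ u = -v) ∧ u ∈ l2) := by
      rcases hmem v hvs with h | h
      · rcases List.mem_append.mp h with h | h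
        · exact Or.inl ⟨v, Or.inl rfl, h⟩
        · rcases List.mem_cons.mp h with h | h
          · exact absurd (h ▸ hw0) (by rintro (h1 | h1); exacts [hvne h1, hvne2 h1])
          · exact Or.inr ⟨v, Or.inl rfl, h⟩
      · rcases List.mem_append.mp h with h | h
        · exact Or.inl ⟨-v, Or.inr rfl, h⟩
        · rcases List.mem_cons.mp h with h | h
          · exact absurd (h ▸ hw0) (by rintro (h1 | h1); exacts [hvne3 h1, hvne4 h1])
          · exact Or.inr ⟨-v, Or.inr rfl, h⟩
    rcases hcases with ⟨u, hu, hul⟩ | ⟨u, hu, hul⟩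
    · rw [← mul_assoc, hl1 u hu hul, zero_mul]
    · rw [hl2 u hu hul, mul_zero]
  have hsum' : ∑ v ∈ s, c v • ι ℝ v = 0 := by
    have h := congrArg (ι ℝ) hsum
    simpa only [map_sum, map_smul, map_zero] using h
  have hrepr : c v0 • ι ℝ v0 = -∑ v ∈ s.erase v0, c v • ι ℝ v := by
    have h2 := Finset.sum_erase_add s (fun v => c v • ι ℝ v) hv0
    rw [hsum'] at h2
    exact eq_neg_of_add_eq_zero_right h2
  have hmain : (l1.map (ι ℝ)).prod * (ι ℝ v0 * (l2.map (ι ℝ)).prod) = 0 := by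
    have hv0expr : ι ℝ v0 = (c v0)⁻¹ • (c v0 • ι ℝ v0) := by
      rw [smul_smul, inv_mul_cancel₀ hc0, one_smul]
    rw [hv0expr, hrepr, smul_neg, neg_mul, mul_neg, smul_mul_assoc,
      Finset.sum_mul, Finset.smul_sum, Finset.mul_sum]
    have hz : ∀ v ∈ s.erase v0,
        (l1.map (ι ℝ)).prod * ((c v • ι ℝ v) * (l2.map (ι ℝ)).prod) = 0 := by
      intro v hv
      rw [smul_mul_assoc, mul_smul_comm, key v hv, smul_zero]
    rw [Finset.sum_congr rfl fun v hv => by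
      rw [smul_mul_assoc, mul_smul_comm, mul_smul_comm, key v hv, smul_zero, smul_zero]]
    rw [Finset.sum_const_zero, neg_zero]
  rcases hw0 with rfl | rfl
  · exact hmain
  · rw [map_neg, neg_mul, mul_neg, hmain, neg_zero]

lemma finrank_GrM : Module.finrank ℝ (GrM n) = 2 * n := by
  have h : Module.finrank ℝ ((Fin n × Bool) → ℝ) = 2 * n := by
    rw [Module.finrank_fintype_fun_eq_card, Fintype.card_prod, Fintype.card_fin,
      Fintype.card_bool, mul_comm]
  exact h

/-- Products of more than `2n` generators vanish. -/
lemma long_zero (l : List (GrM n)) (hng : ∀ v ∈ l, ∀ w ∈ l, v + w ≠ 0)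
    (hlen : 2 * n < l.length) : (l.map (ι ℝ)).prod = 0 := by
  by_cases hnd : l.Nodup
  · have hcard : 2 * n < l.toFinset.card := by
      rwa [List.toFinset_card_of_nodup hnd]
    have hdep : ¬ LinearIndependent ℝ (fun x => x : l.toFinset → GrM n) := by
      intro h
      have := h.finset_card_le_finrank
      rw [finrank_GrM] at this
      omega
    obtain ⟨g, hg, i0, hi0⟩ := Fintype.not_linearIndependent_iff.mp hdep
    refine dep_zero l l.toFinset
      (fun v => if h : v ∈ l.toFinset then g ⟨v, h⟩ else 0)
      (fun v hv => Or.inl (List.mem_toFinset.mp hv))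
      (fun v hv w hw => hng v (List.mem_toFinset.mp hv) w (List.mem_toFinset.mp hw))
      ?_ ↑i0 i0.2 ?_
    · have he : ∑ v ∈ l.toFinset,
          (if h : v ∈ l.toFinset then g ⟨v, h⟩ else 0) • v
          = ∑ i : l.toFinset, g i • (i : GrM n) := by
        rw [← Finset.sum_coe_sort]
        exact Finset.sum_congr rfl fun i _ => by rw [dif_pos i.2]
      rw [he]
      exact hg
    · intro h0
      apply hi0
      simpa only [dif_pos i0.2] using h0
  · exact dup_zero l hnd

/-! ### Concrete generator vectors -/

/-- The basis vector for generator `(i, b)`. -/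
def φ (i : Fin n) (b : Bool) : GrM n := Pi.single (i, b) 1

lemma phi_apply (i : Fin n) (b : Bool) (q : Fin n × Bool) :
    φ i b q = if q = (i, b) then 1 else 0 :=
  Pi.single_apply _ _ _

lemma phi_val (x pt : Fin n) (s : Bool) :
    φ x s ((pt, s) : Fin n × Bool) = if pt = x then 1 else 0 := by
  rw [phi_apply]
  by_cases hx : pt = x
  · rw [if_pos (by rw [hx]), if_pos hx]
  · rw [if_neg (fun heq => hx (congrArg Prod.fst heq)), if_neg hx]

lemma diff_add_diff {a b c d : Fin n} (s : Bool) (hab : a ≠ b) (hcd : c ≠ d)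
    (h : (φ a s - φ b s) + (φ c s - φ d s) = 0) : a = d ∧ b = c := by
  have hba : b ≠ a := hab.symm
  have h1 := congrFun h (a, s)
  have h2 := congrFun h (b, s)
  simp only [Pi.add_apply, Pi.sub_apply, Pi.zero_apply, phi_val, if_true] at h1 h2
  rw [if_neg hab] at h1
  rw [if_neg hba] at h2
  constructor
  · by_cases had : a = d
    · exact had
    · by_cases hac : a = c
      · rw [if_pos hac, if_neg had] at h1; norm_num at h1
      · rw [if_neg hac, if_neg had] at h1; norm_num at h1
  · by_cases hbc : b = c
    · exact hbc
    · by_cases hbd : b = d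
      · rw [if_neg hbc, if_pos hbd] at h2; norm_num at h2
      · rw [if_neg hbc, if_neg hbd] at h2; norm_num at h2

lemma diff_add_diff' {a b c d : Fin n} (s : Bool) (hab : a ≠ b) (hcd : c ≠ d)
    (h : (φ a s - φ b s) + (φ c s - φ d s) = 0) : a = d ∧ b = c :=
  diff_add_diff s hab hcd h

lemma diff_add_diff_ne {a b c d : Fin n} (hcd : c ≠ d) :
    (φ a false - φ b false) + (φ c true - φ d true) ≠ 0 := by
  intro h
  have h1 := congrFun h (c, true)
  simp only [Pi.add_apply, Pi.sub_apply, Pi.zero_apply] at h1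
  have hbool : ∀ x : Fin n, φ x false ((c, true) : Fin n × Bool) = 0 := fun x => by
    rw [phi_apply, if_neg]
    intro heq
    exact Bool.noConfusion (congrArg Prod.snd heq)
  have hc1 : φ c true ((c, true) : Fin n × Bool) = 1 := by rw [phi_apply, if_pos rfl]
  have hd1 : φ d true ((c, true) : Fin n × Bool) = 0 := by
    rw [phi_apply, if_neg (fun heq => hcd (congrArg Prod.fst heq))]
  rw [hbool a, hbool b, hc1, hd1] at h1
  norm_num at h1

/-- The `ξ`-difference vector of an edge. -/
def aξ (p : Fin n × Fin n) : GrM n := φ p.1 false - φ p.2 false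

/-- The `η`-difference vector of an edge. -/
def aη (p : Fin n × Fin n) : GrM n := φ p.1 true - φ p.2 true

/-- The interleaved list of generator vectors of an edge set. -/
def ilist (F : Finset (Fin n × Fin n)) : List (GrM n) :=
  F.toList.flatMap (fun p => [aξ p, aη p])

lemma ilist_mem (F : Finset (Fin n × Fin n)) (v : GrM n) :
    v ∈ ilist F ↔ ∃ p ∈ F, v = aξ p ∨ v = aη p := by
  simp only [ilist, List.mem_flatMap, Finset.mem_toList, List.mem_cons,
    List.mem_singleton, List.not_mem_nil, or_false]

/-! ### The key algebraic identity -/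

lemma key_id (i j : Fin n) :
    udot i j + 1 = ι ℝ (aξ (i, j)) * ι ℝ (aη (i, j)) * gz j := by
  have A1 : gη j * gξ j * gη j = 0 := ι_mul_mul_ι (φ j true) (gξ j)
  have A2 : gξ j * gη i * gξ j = 0 := ι_mul_mul_ι (φ j false) (gη i)
  have A3 : gξ j * gη j * gξ j = 0 := ι_mul_mul_ι (φ j false) (gη j)
  have m1 : gξ i * gη j * gξ j * gη j = 0 := by
    rw [mul_assoc (gξ i), mul_assoc (gξ i), A1, mul_zero]
  have m2 : gξ j * gη i * gξ j * gη j = 0 := by rw [A2, zero_mul]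
  have m3 : gξ j * gη j * gξ j * gη j = 0 := by rw [A3, zero_mul]
  have exi : ι ℝ (aξ (i, j)) = gξ i - gξ j := by
    simp only [aξ]; rw [map_sub]; rfl
  have eyi : ι ℝ (aη (i, j)) = gη i - gη j := by
    simp only [aη]; rw [map_sub]; rfl
  rw [exi, eyi, udot, gz, gz, ← sub_eq_zero]
  rw [show -(gξ i * gη j) - gξ j * gη i - (1 - gξ i * gη i) * (1 - gξ j * gη j) + 1
      - (gξ i - gξ j) * (gη i - gη j) * (1 - gξ j * gη j)
      = -(gξ i * gη j * gξ j * gη j) - gξ j * gη i * gξ j * gη j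
        + gξ j * gη j * gξ j * gη j from by noncomm_ring]
  rw [m1, m2, m3]
  simp

lemma key_id' (p : Fin n × Fin n) :
    udot p.1 p.2 + 1 = ι ℝ (aξ p) * ι ℝ (aη p) * gz p.2 :=
  key_id p.1 p.2

lemma central_gz (j : Fin n) (y : Gr n) : Commute (gz j) y := by
  have h := central_ιι (φ j false) (φ j true) y
  exact (Commute.one_left y).sub_left h

lemma central_w (i j : Fin n) (y : Gr n) : Commute (udot i j + 1) y := by
  rw [key_id]
  exact (central_ιι _ _ y).mul_left (central_gz j y)

lemma central_cβ (β : Fin n → Fin n → ℝ) (p : Fin n × Fin n) (y : Gr n) :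
    Commute (β p.1 p.2 • (udot p.1 p.2 + 1)) y :=
  (central_w _ _ y).smul_left _

lemma w_sq (i j : Fin n) : (udot i j + 1) * (udot i j + 1) = 0 := by
  rw [key_id]
  have gen : ∀ (a b zz : Gr n), (∀ y, Commute zz y) → a * b * a = 0 →
      a * b * zz * (a * b * zz) = 0 := by
    intro a b zz hzz h
    calc a * b * zz * (a * b * zz) = a * b * (zz * (a * b * zz)) := by rw [mul_assoc]
      _ = a * b * (a * b * zz * zz) := by rw [(hzz _).eq]
      _ = (a * b * a) * (b * zz * zz) := by noncomm_ring
      _ = 0 := by rw [h, zero_mul]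
  exact gen _ _ _ (central_gz j) (ι_mul_mul_ι _ _)

lemma cβ_sq (β : Fin n → Fin n → ℝ) (p : Fin n × Fin n) :
    (β p.1 p.2 • (udot p.1 p.2 + 1)) * (β p.1 p.2 • (udot p.1 p.2 + 1)) = 0 := by
  rw [smul_mul_assoc, mul_smul_comm, w_sq, smul_zero, smul_zero]

/-! ### Factorization of edge products -/

lemma list_fact (β : Fin n → Fin n → ℝ) (L : List (Fin n × Fin n)) :
    (L.map (fun p => β p.1 p.2 • (udot p.1 p.2 + 1))).prod
      = (L.map (fun p => β p.1 p.2)).prod •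
        ((L.map (fun p => gz p.2)).prod *
          ((L.flatMap (fun p => [aξ p, aη p])).map (ι ℝ)).prod) := by
  induction L with
  | nil => simp
  | cons p t ih =>
      simp only [List.map_cons, List.prod_cons, List.flatMap_cons, List.map_append,
        List.prod_append, List.map_nil, List.prod_nil, mul_one]
      rw [ih, key_id' p]
      have gen : ∀ (r s : ℝ) (a b z Z W : Gr n), (∀ y, Commute z y) →
          (∀ y, Commute (a * b) y) →
          (r • (a * b * z)) * (s • (Z * W)) = (r * s) • ((z * Z) * (a * b * W)) := by
        intro r s a b z Z W hz hab
        rw [smul_mul_assoc, mul_smul_comm, smul_smul]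
        congr 1
        calc a * b * z * (Z * W) = (a * b) * (z * (Z * W)) := by noncomm_ring
          _ = (z * (Z * W)) * (a * b) := (hab _).eq
          _ = z * Z * (W * (a * b)) := by noncomm_ring
          _ = z * Z * (a * b * W) := by rw [← (hab W).eq]
      exact gen _ _ _ _ _ _ _ (central_gz p.2)
        (central_ιι (aξ p) (aη p))

lemma ilist_length (F : Finset (Fin n × Fin n)) : (ilist F).length = 2 * F.card := by
  have : ∀ L : List (Fin n × Fin n),
      (L.flatMap (fun p => [aξ (n := n) p, aη p])).length = 2 * L.length := by
    intro L
    induction L with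
    | nil => simp
    | cons p t ih =>
        rw [List.flatMap_cons, List.length_append, ih]
        simp only [List.length_cons, List.length_nil]
        omega
  rw [ilist, this, Finset.length_toList]

lemma hng_ilist (F : Finset (Fin n × Fin n)) (hF : ∀ p ∈ F, p.1 < p.2) :
    ∀ v ∈ ilist F, ∀ w ∈ ilist F, v + w ≠ 0 := by
  intro v hv w hw h
  obtain ⟨p, hp, hvp⟩ := (ilist_mem F v).mp hv
  obtain ⟨q, hq, hwq⟩ := (ilist_mem F w).mp hw
  have hp' := hF p hp
  have hq' := hF q hq
  have hpne : p.1 ≠ p.2 := ne_of_lt hp'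
  have hqne : q.1 ≠ q.2 := ne_of_lt hq'
  rcases hvp with rfl | rfl <;> rcases hwq with rfl | rfl
  · simp only [aξ] at h
    obtain ⟨h1, h2⟩ := diff_add_diff false hpne hqne h
    have : p.1 < p.1 := lt_trans (lt_of_lt_of_eq hp' h2) (lt_of_lt_of_eq hq' h1.symm)
    exact lt_irrefl _ this
  · simp only [aξ, aη] at h
    exact diff_add_diff_ne hqne h
  · simp only [aξ, aη] at h
    rw [add_comm] at h
    exact diff_add_diff_ne hpne h
  · simp only [aη] at h
    obtain ⟨h1, h2⟩ := diff_add_diff true hpne hqne h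
    have : p.1 < p.1 := lt_trans (lt_of_lt_of_eq hp' h2) (lt_of_lt_of_eq hq' h1.symm)
    exact lt_irrefl _ this

/-! ### Cyclic products vanish -/

lemma walk_sum {G : SimpleGraph (Fin n)} {a b : Fin n} (w : G.Walk a b) :
    (w.darts.map (fun d => φ (n := n) d.toProd.1 false - φ d.toProd.2 false)).sum
      = φ a false - φ b false := by
  induction w with
  | nil => simp
  | cons h p ih =>
      simp only [SimpleGraph.Walk.darts_cons, List.map_cons, List.sum_cons, ih]
      abel

lemma cyc_zero (F : Finset (Fin n × Fin n)) (hF : ∀ p ∈ F, p.1 < p.2)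
    (hnac : ¬ (SimpleGraph.fromRel (fun i j => (i, j) ∈ F)).IsAcyclic) :
    ((ilist F).map (ι ℝ)).prod = 0 := by
  set G := SimpleGraph.fromRel (fun i j => (i, j) ∈ F) with hG
  rw [SimpleGraph.IsAcyclic] at hnac
  push_neg at hnac
  obtain ⟨v, c, hc⟩ := hnac
  have hdartne : ∀ d : G.Dart, d.toProd.1 ≠ d.toProd.2 := fun d => d.adj.ne
  have hedges_nodup : (c.darts.map SimpleGraph.Dart.edge).Nodup := by
    have h := hc.isCircuit.isTrail.edges_nodup
    rwa [SimpleGraph.Walk.edges] at h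
  have hd_nodup : c.darts.Nodup := hedges_nodup.of_map _
  have hinj : ∀ d ∈ c.darts, ∀ e ∈ c.darts, d.edge = e.edge → d = e :=
    List.inj_on_of_nodup_map hedges_nodup
  set dv : G.Dart → GrM n := fun d => φ d.toProd.1 false - φ d.toProd.2 false with hdv
  set L := c.darts.map dv with hL
  have hLsum : L.sum = 0 := by
    rw [hL, walk_sum c, sub_self]
  have hLnodup : L.Nodup := by
    refine List.Nodup.map_on ?_ hd_nodup
    intro d hd e he hde
    have h0 : dv d + (φ e.toProd.2 false - φ e.toProd.1 false) = 0 := by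
      rw [hde]
      simp only [hdv]
      abel
    simp only [hdv] at h0
    obtain ⟨h1, h2⟩ := diff_add_diff false (hdartne d) (Ne.symm (hdartne e)) h0
    exact SimpleGraph.Dart.ext _ _ (Prod.ext h1 h2)
  have hmem : ∀ u ∈ L.toFinset, u ∈ ilist F ∨ -u ∈ ilist F := by
    intro u hu
    obtain ⟨d, hd, rfl⟩ := List.mem_map.mp (List.mem_toFinset.mp hu)
    have hadj : (SimpleGraph.fromRel (fun i j => (i, j) ∈ F)).Adj d.toProd.1 d.toProd.2 :=
      d.adj
    rw [SimpleGraph.fromRel_adj] at hadj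
    rcases hadj.2 with h | h
    · left
      refine (ilist_mem F _).mpr ⟨(d.toProd.1, d.toProd.2), h, Or.inl ?_⟩
      simp only [hdv, aξ]
    · right
      refine (ilist_mem F _).mpr ⟨(d.toProd.2, d.toProd.1), h, Or.inl ?_⟩
      simp only [hdv, aξ, neg_sub]
  have hng' : ∀ u ∈ L.toFinset, ∀ u' ∈ L.toFinset, u + u' ≠ 0 := by
    intro u hu u' hu' h
    obtain ⟨d, hd, rfl⟩ := List.mem_map.mp (List.mem_toFinset.mp hu)
    obtain ⟨e, he, rfl⟩ := List.mem_map.mp (List.mem_toFinset.mp hu')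
    simp only [hdv] at h
    obtain ⟨h1, h2⟩ := diff_add_diff false (hdartne d) (hdartne e) h
    have hedge : d.edge = e.edge := by
      have hprod : d.toProd = (e.toProd.2, e.toProd.1) := Prod.ext h1 h2
      rw [show e.edge = s(e.toProd.1, e.toProd.2) from rfl, SimpleGraph.dart_edge_eq_mk'_iff]
      exact Or.inr hprod
    have hde := hinj d hd e he hedge
    rw [hde] at h1
    exact hdartne e (h1.symm ▸ rfl)
  have hne : c.darts ≠ [] := by
    have h3 := hc.three_le_length
    intro h
    rw [← SimpleGraph.Walk.length_darts, h] at h3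
    simp at h3
  obtain ⟨d0, hd0⟩ := List.exists_mem_of_ne_nil c.darts hne
  refine dep_zero (ilist F) L.toFinset (fun _ => 1) hmem hng' ?_ (dv d0) ?_ one_ne_zero
  · have h := List.sum_toFinset (id : GrM n → GrM n) hLnodup
    rw [List.map_id] at h
    calc ∑ u ∈ L.toFinset, (1 : ℝ) • u = ∑ u ∈ L.toFinset, id u :=
          Finset.sum_congr rfl fun u _ => by simp
      _ = L.sum := h
      _ = 0 := hLsum
  · exact List.mem_toFinset.mpr (List.mem_map.mpr ⟨d0, hd0, rfl⟩)

/-! ### List products over finsets -/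

lemma pairwise_comm (l : List (Gr n)) (h : ∀ x ∈ l, ∀ y : Gr n, Commute x y) :
    l.Pairwise Commute := by
  induction l with
  | nil => exact List.Pairwise.nil
  | cons a t ih =>
      refine List.pairwise_cons.mpr ⟨fun y _ => h a List.mem_cons_self y, ?_⟩
      exact ih (fun x hx y => h x (List.mem_cons_of_mem a hx) y)

lemma LP_insert (β : Fin n → Fin n → ℝ) (p : Fin n × Fin n)
    (F : Finset (Fin n × Fin n)) (hp : p ∉ F) :
    ((insert p F).toList.map (fun q => β q.1 q.2 • (udot q.1 q.2 + 1))).prod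
      = (β p.1 p.2 • (udot p.1 p.2 + 1)) *
        (F.toList.map (fun q => β q.1 q.2 • (udot q.1 q.2 + 1))).prod := by
  have hperm : (insert p F).toList.Perm (p :: F.toList) := Finset.toList_insert hp
  have h := (hperm.map (fun q => β q.1 q.2 • (udot q.1 q.2 + 1))).prod_eq' ?_
  · rw [h, List.map_cons, List.prod_cons]
  · refine pairwise_comm _ ?_
    rintro x hx y
    obtain ⟨q, _, rfl⟩ := List.mem_map.mp hx
    exact central_cβ β q y

set_option maxHeartbeats 1600000 in
lemma pow_sum (β : Fin n → Fin n → ℝ) (S : Finset (Fin n × Fin n)) (k : ℕ) :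
    (∑ p ∈ S, β p.1 p.2 • (udot p.1 p.2 + 1)) ^ k
      = k.factorial • ∑ F ∈ S.powerset.filter (fun F => F.card = k),
          (F.toList.map (fun q => β q.1 q.2 • (udot q.1 q.2 + 1))).prod := by
  induction S using Finset.induction_on generalizing k with
  | empty =>
      rcases k with _ | k
      · rw [Finset.sum_empty, pow_zero, Finset.powerset_empty]
        have he : Finset.filter (fun F : Finset (Fin n × Fin n) => F.card = 0) {∅} = {∅} := by
          ext F
          simp [Finset.card_eq_zero]
        rw [he, Finset.sum_singleton, Finset.toList_empty, List.map_nil, List.prod_nil,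
          Nat.factorial_zero, one_smul]
      · rw [Finset.sum_empty, zero_pow (Nat.succ_ne_zero k)]
        have : (∅ : Finset (Fin n × Fin n)).powerset.filter
            (fun F => F.card = k + 1) = ∅ := by
          ext F
          simp only [Finset.powerset_empty, Finset.mem_filter, Finset.mem_singleton,
            Finset.notMem_empty, iff_false, not_and]
          rintro rfl
          simp
        rw [this, Finset.sum_empty, smul_zero]
  | insert p S' hp ih =>
      rw [Finset.sum_insert hp]
      set cp := β p.1 p.2 • (udot p.1 p.2 + 1) with hcp
      set y := ∑ q ∈ S', β q.1 q.2 • (udot q.1 q.2 + 1) with hy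
      have hcomm : Commute cp y := central_cβ β p y
      have himg : ∀ m : ℕ, ((S'.powerset.image (insert p)).filter (fun F => F.card = m + 1))
          = (S'.powerset.filter (fun F => F.card = m)).image (insert p) := by
        intro m
        ext F
        simp only [Finset.mem_filter, Finset.mem_image, Finset.mem_powerset]
        constructor
        · rintro ⟨⟨F', hF', rfl⟩, hcard⟩
          refine ⟨F', ⟨hF', ?_⟩, rfl⟩
          rw [Finset.card_insert_of_notMem (fun h => hp (hF' h))] at hcard
          omega
        · rintro ⟨F', ⟨hF', hcard⟩, rfl⟩
          exact ⟨⟨F', hF', rfl⟩, by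
            rw [Finset.card_insert_of_notMem (fun h => hp (hF' h))]; omega⟩
      have hinj : ∀ F1 ∈ S'.powerset.filter (fun F => F.card = k - 1),
          ∀ F2 ∈ S'.powerset.filter (fun F => F.card = k - 1),
          insert p F1 = insert p F2 → F1 = F2 := by
        intro F1 h1 F2 h2 heq
        have hp1 : p ∉ F1 := fun h =>
          hp ((Finset.mem_powerset.mp (Finset.mem_filter.mp h1).1) h)
        have hp2 : p ∉ F2 := fun h =>
          hp ((Finset.mem_powerset.mp (Finset.mem_filter.mp h2).1) h)
        rw [← Finset.erase_insert hp1, heq, Finset.erase_insert hp2]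
      have hdisj : ∀ m : ℕ, Disjoint (S'.powerset.filter (fun F => F.card = m))
          ((S'.powerset.image (insert p)).filter (fun F => F.card = m)) := by
        intro m
        rw [Finset.disjoint_left]
        rintro F h1 h2
        obtain ⟨himg2, _⟩ := Finset.mem_filter.mp h2
        obtain ⟨F', _, rfl⟩ := Finset.mem_image.mp himg2
        exact hp ((Finset.mem_powerset.mp (Finset.mem_filter.mp h1).1)
          (Finset.mem_insert_self p F'))
      have hsplit : ∀ m : ℕ, (insert p S').powerset.filter (fun F => F.card = m)
          = (S'.powerset.filter (fun F => F.card = m))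
            ∪ ((S'.powerset.image (insert p)).filter (fun F => F.card = m)) := by
        intro m
        rw [Finset.powerset_insert, Finset.filter_union]
      rcases k with _ | k
      · -- k = 0
        rw [pow_zero]
        have h0 : (insert p S').powerset.filter (fun F => F.card = 0) = {∅} := by
          ext F
          simp only [Finset.mem_filter, Finset.mem_powerset, Finset.mem_singleton,
            Finset.card_eq_zero]
          constructor
          · rintro ⟨_, rfl⟩; rfl
          · rintro rfl; exact ⟨Finset.empty_subset _, rfl⟩
        rw [h0, Finset.sum_singleton, Finset.toList_empty, List.map_nil, List.prod_nil,
          Nat.factorial_zero, one_smul]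
      · -- k = k + 1
        rw [hcomm.add_pow, Finset.sum_range_succ', Finset.sum_range_succ']
        have hzero : (∑ i ∈ Finset.range k,
            cp ^ (i + 1 + 1) * y ^ (k + 1 - (i + 1 + 1)) * ((k + 1).choose (i + 1 + 1) : Gr n))
            = 0 := by
          refine Finset.sum_eq_zero fun i _ => ?_
          have : cp ^ (i + 1 + 1) = cp ^ i * (cp * cp) := by
            rw [← pow_two, ← pow_add]
          rw [this, cβ_sq β p, mul_zero, zero_mul, zero_mul]
        rw [hzero, zero_add]
        simp only [zero_add, pow_one, pow_zero, one_mul, Nat.add_sub_cancel,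
          Nat.sub_zero, Nat.choose_one_right, Nat.choose_zero_right, Nat.cast_one, mul_one]
        rw [ih k, ih (k + 1)]
        -- LHS: cp * (k! • SS2) * ↑(k+1) + (k+1)! • SS1
        rw [hsplit (k + 1), Finset.sum_union (hdisj (k + 1)), himg k]
        rw [Finset.sum_image (by
          intro F1 h1 F2 h2 heq
          have hp1 : p ∉ F1 := fun h =>
            hp ((Finset.mem_powerset.mp (Finset.mem_filter.mp h1).1) h)
          have hp2 : p ∉ F2 := fun h =>
            hp ((Finset.mem_powerset.mp (Finset.mem_filter.mp h2).1) h)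
          rw [← Finset.erase_insert hp1, heq, Finset.erase_insert hp2])]
        rw [Finset.sum_congr rfl (fun F hF => LP_insert β p F (fun h =>
          hp ((Finset.mem_powerset.mp (Finset.mem_filter.mp hF).1) h)))]
        rw [← Finset.mul_sum]
        set SS1 := ∑ F ∈ S'.powerset.filter (fun F => F.card = k + 1),
          (F.toList.map (fun q => β q.1 q.2 • (udot q.1 q.2 + 1))).prod with hS1n
        set SS2 := ∑ F ∈ S'.powerset.filter (fun F => F.card = k),
          (F.toList.map (fun q => β q.1 q.2 • (udot q.1 q.2 + 1))).prod with hS2n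
        have hcast : cp * (k.factorial • SS2) * ((k + 1 : ℕ) : Gr n)
            = ((k + 1) * k.factorial) • (cp * SS2) := by
          rw [mul_smul_comm, ← (Nat.cast_commute (k + 1) (k.factorial • (cp * SS2))).eq]
          rw [← nsmul_eq_mul, smul_smul]
        rw [hcast, ← Nat.factorial_succ, smul_add]
        exact add_comm _ _

end ForestExpAux

set_option maxHeartbeats 1600000 in
/-- Expansion identity: for symmetric weights `β`,
`exp(½(u, Δ_β u)) = ∑_{F forest} ∏_{ij∈F} βᵢⱼ (uᵢ·uⱼ + 1)`, where
`½(u, Δ_β u) = ∑_{i<j} βᵢⱼ (uᵢ·uⱼ + 1)`; the sum over edge subsets reduces to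
forests because products containing cycles vanish. -/
theorem exp_laplacian_eq_forest_expansion (n : ℕ)
    (β : Fin n → Fin n → ℝ) (hβ : ∀ i j, β i j = β j i) :
    expG (∑ p ∈ Finset.univ.filter (fun p : Fin n × Fin n => p.1 < p.2),
        β p.1 p.2 • (udot p.1 p.2 + 1))
    = ∑ F : Finset (Fin n × Fin n),
        if ForestRep F
          then (F.toList.map (fun p => β p.1 p.2 • (udot p.1 p.2 + 1))).prod
          else 0 := by
  classical
  set P := Finset.univ.filter (fun p : Fin n × Fin n => p.1 < p.2) with hP
  have hPlt : ∀ p ∈ P, p.1 < p.2 := fun p hp => (Finset.mem_filter.mp hp).2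
  simp only [expG]
  have step1 : ∀ k ∈ Finset.range (2 * n + 1),
      (k.factorial : ℝ)⁻¹ • (∑ p ∈ P, β p.1 p.2 • (udot p.1 p.2 + 1)) ^ k
        = ∑ F ∈ P.powerset.filter (fun F => F.card = k),
            (F.toList.map (fun p => β p.1 p.2 • (udot p.1 p.2 + 1))).prod := by
    intro k _
    rw [ForestExpAux.pow_sum, ← Nat.cast_smul_eq_nsmul ℝ, smul_smul,
      inv_mul_cancel₀ (Nat.cast_ne_zero.mpr k.factorial_ne_zero), one_smul]
  rw [Finset.sum_congr rfl step1]
  have step2 : ∀ k ∈ Finset.range (2 * n + 1),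
      P.powerset.filter (fun F => F.card = k)
        = (P.powerset.filter (fun F => F.card ≤ 2 * n)).filter
            (fun F => F.card = k) := by
    intro k hk
    have hk' := Finset.mem_range.mp hk
    rw [Finset.filter_filter]
    exact Finset.filter_congr fun F _ => by omega
  rw [Finset.sum_congr rfl (fun k hk => by rw [step2 k hk])]
  rw [Finset.sum_fiberwise_of_maps_to (fun F hF => Finset.mem_range.mpr
    (by have := (Finset.mem_filter.mp hF).2; omega))]
  rw [Finset.sum_subset (Finset.filter_subset _ _) ?big]
  case big =>
    intro F hF hnF
    have hFP := Finset.mem_powerset.mp hF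
    have hcard : 2 * n < F.card := by
      by_contra h
      exact hnF (Finset.mem_filter.mpr ⟨hF, by omega⟩)
    have hFlt : ∀ p ∈ F, p.1 < p.2 := fun p hp => hPlt p (hFP hp)
    have h0 := ForestExpAux.long_zero (ForestExpAux.ilist F)
      (ForestExpAux.hng_ilist F hFlt)
      (by rw [ForestExpAux.ilist_length]; omega)
    simp only [ForestExpAux.ilist] at h0
    rw [ForestExpAux.list_fact, h0, mul_zero, smul_zero]
  have step3 : ∀ F ∈ P.powerset,
      (F.toList.map (fun p => β p.1 p.2 • (udot p.1 p.2 + 1))).prod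
        = if ForestRep F
            then (F.toList.map (fun p => β p.1 p.2 • (udot p.1 p.2 + 1))).prod
            else 0 := by
    intro F hF
    by_cases h : ForestRep F
    · rw [if_pos h]
    · rw [if_neg h]
      have hFlt : ∀ p ∈ F, p.1 < p.2 := fun p hp => hPlt p (Finset.mem_powerset.mp hF hp)
      have hnac : ¬ (SimpleGraph.fromRel (fun i j => (i, j) ∈ F)).IsAcyclic :=
        fun hac => h ⟨hFlt, hac⟩
      have h0 := ForestExpAux.cyc_zero F hFlt hnac
      simp only [ForestExpAux.ilist] at h0
      rw [ForestExpAux.list_fact, h0, mul_zero, smul_zero]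
  rw [Finset.sum_congr rfl step3]
  refine Finset.sum_subset (Finset.subset_univ _) ?_
  intro F _ hF
  have hnFR : ¬ ForestRep F := by
    intro hFR
    refine hF (Finset.mem_powerset.mpr fun p hp => ?_)
    rw [hP]
    exact Finset.mem_filter.mpr ⟨Finset.mem_univ p, hFR.1 p hp⟩
  exact if_neg hnFR
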